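/- arXiv:2209.07148 — 2 statements merged into one kernel-verified Lean document; each statement's English description precedes it below -/
import Mathlib

section
/- Let μ = P_X ⊗ π_0 and ν = P_X ⊗ π_θ be joint probability measures on contexts and actions with ν ≪ μ and importance weight w = dν/dμ satisfying w ≤ w_m everywhere for some finite w_m. Let the reward function f take values in [−1, 0]. Then Var_μ(w·f) ≤ w_m·√(min(D(ν‖μ), D(μ‖ν))/2) + 1, where D denotes the KL divergence. -/
open MeasureTheory ProbabilityTheory Real
open scoped ENNReal Classical ProbabilityTheory

/-- The Kullback–Leibler divergence `D(P ‖ Q)`: equal to `∫ log (dP/dQ) dP` when `P ≪ Q`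
(and the log-likelihood ratio is integrable), and `∞` otherwise. -/
noncomputable def klDiv {Z : Type*} [MeasurableSpace Z] (P Q : Measure Z) : ℝ≥0∞ :=
  if P ≪ Q ∧ Integrable (llr P Q) P then ENNReal.ofReal (∫ z, llr P Q z ∂P) else ⊤

lemma mono_of_hasDerivAt {f f' : ℝ → ℝ} {a b : ℝ} (h0 : 0 < a) (hab : a ≤ b)
    (hd : ∀ y, 0 < y → HasDerivAt f (f' y) y)
    (h' : ∀ y, a ≤ y → y ≤ b → 0 ≤ f' y) : f a ≤ f b := by
  have cont : ContinuousOn f (Set.Icc a b) := fun y hy =>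
    ((hd y (h0.trans_le hy.1)).continuousAt).continuousWithinAt
  have mono := monotoneOn_of_deriv_nonneg (convex_Icc a b) cont
    (fun y hy => by
      rw [interior_Icc] at hy
      exact (hd y (h0.trans hy.1)).differentiableAt.differentiableWithinAt)
    (fun y hy => by
      rw [interior_Icc] at hy
      rw [(hd y (h0.trans hy.1)).deriv]
      exact h' y hy.1.le hy.2.le)
  exact mono (Set.left_mem_Icc.2 hab) (Set.right_mem_Icc.2 hab) hab

lemma hasDerivAt_artanh_aux {y : ℝ} (hy : 0 < y) :
    HasDerivAt (fun t : ℝ => Real.log t - 2*(t-1)/(t+1)) ((y-1)^2/(y*(y+1)^2)) y := by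
  have h1 : HasDerivAt (fun t : ℝ => 2*(t-1)) 2 y := by
    simpa using ((hasDerivAt_id y).sub_const 1).const_mul (2:ℝ)
  have h2 : HasDerivAt (fun t : ℝ => t+1) 1 y := (hasDerivAt_id y).add_const 1
  have h3 := h1.div h2 (by linarith)
  have h4 := (Real.hasDerivAt_log hy.ne').sub h3
  refine HasDerivAt.congr_deriv h4 ?_
  field_simp
  ring

lemma artanh_le_log {x : ℝ} (hx : 0 < x) (h1 : 1 ≤ x) : 2*(x-1)/(x+1) ≤ Real.log x := by
  have := mono_of_hasDerivAt one_pos h1 (fun y hy => hasDerivAt_artanh_aux hy)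
    (fun y hy1 hy2 => div_nonneg (sq_nonneg _) (by nlinarith))
  simp only [Real.log_one] at this
  linarith [this]

lemma log_le_artanh {x : ℝ} (hx : 0 < x) (h1 : x ≤ 1) : Real.log x ≤ 2*(x-1)/(x+1) := by
  have := mono_of_hasDerivAt hx h1 (fun y hy => hasDerivAt_artanh_aux hy)
    (fun y hy1 hy2 => div_nonneg (sq_nonneg _) (by nlinarith))
  simp only [Real.log_one] at this
  linarith [this]

lemma hasDerivAt_h_aux {y : ℝ} (hy : 0 < y) :
    HasDerivAt (fun t : ℝ => t * Real.log t - t + 1 - 3*(t-1)^2/(2*(t+2)))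
      (Real.log y - 3*(y-1)*(y+5)/(2*(y+2)^2)) y := by
  have h1 : HasDerivAt (fun t : ℝ => 3*(t-1)^2) (3*(2*(y-1))) y := by
    simpa using (((hasDerivAt_id y).sub_const 1).pow 2).const_mul (3:ℝ)
  have h2 : HasDerivAt (fun t : ℝ => 2*(t+2)) 2 y := by
    simpa using ((hasDerivAt_id y).add_const 2).const_mul (2:ℝ)
  have h3 := h1.div h2 (by linarith)
  have h4 := (((Real.hasDerivAt_mul_log hy.ne').sub (hasDerivAt_id y)).add_const 1).sub h3
  refine HasDerivAt.congr_deriv h4 ?_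
  field_simp
  ring

lemma key_ineq {x : ℝ} (hx : 0 ≤ x) :
    3*(x-1)^2/(2*(x+2)) ≤ x * Real.log x - x + 1 := by
  rcases eq_or_lt_of_le hx with h0 | h0
  · rw [← h0]; norm_num
  have hgoal : ∀ z : ℝ, 0 < z →
      0 ≤ z * Real.log z - z + 1 - 3*(z-1)^2/(2*(z+2)) → 3*(z-1)^2/(2*(z+2)) ≤ z * Real.log z - z + 1 := by
    intro z _ h; linarith
  apply hgoal x h0
  have h1val : (1:ℝ) * Real.log 1 - 1 + 1 - 3*((1:ℝ)-1)^2/(2*((1:ℝ)+2)) = 0 := by norm_num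
  rcases le_total 1 x with hx1 | hx1
  · have := mono_of_hasDerivAt one_pos hx1 (fun y hy => hasDerivAt_h_aux hy)
      (fun y hy1 hy2 => by
        have hy : (0:ℝ) < y := by linarith
        have hlog := artanh_le_log hy hy1
        have h2 : 3*(y-1)*(y+5)/(2*(y+2)^2) ≤ 2*(y-1)/(y+1) := by
          rw [div_le_div_iff₀ (by positivity) (by positivity)]
          nlinarith [sq_nonneg (y-1), hy1]
        linarith)
    rw [h1val] at this
    exact this
  · have := mono_of_hasDerivAt h0 hx1
      (f := fun t : ℝ => -(t * Real.log t - t + 1 - 3*(t-1)^2/(2*(t+2))))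
      (f' := fun y => -(Real.log y - 3*(y-1)*(y+5)/(2*(y+2)^2)))
      (fun y hy => (hasDerivAt_h_aux hy).neg)
      (fun y hy1 hy2 => by
        have hy : (0:ℝ) < y := by linarith
        have hlog := log_le_artanh hy hy2
        have h2 : 2*(y-1)/(y+1) ≤ 3*(y-1)*(y+5)/(2*(y+2)^2) := by
          rw [div_le_div_iff₀ (by positivity) (by positivity)]
          nlinarith [sq_nonneg (y-1), hy2]
        linarith)
    simp only [h1val, neg_zero] at this
    linarith

lemma pinsker_aux {Z : Type*} [MeasurableSpace Z] (P Q : Measure Z)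
    [IsProbabilityMeasure P] [IsProbabilityMeasure Q] (h : P ≪ Q)
    (hi : Integrable (llr P Q) P) :
    0 ≤ ∫ z, llr P Q z ∂P ∧
    ∫ z, max ((P.rnDeriv Q z).toReal - 1) 0 ∂Q ≤ Real.sqrt ((∫ z, llr P Q z ∂P)/2) := by
  set g : Z → ℝ := fun z => (P.rnDeriv Q z).toReal with hgdef
  have hgm : Measurable g := (Measure.measurable_rnDeriv P Q).ennreal_toReal
  have hg0 : ∀ z, 0 ≤ g z := fun z => ENNReal.toReal_nonneg
  have hgint : Integrable g Q := Measure.integrable_toReal_rnDeriv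
  have hg1 : ∫ z, g z ∂Q = 1 := by
    rw [hgdef, Measure.integral_toReal_rnDeriv h]; simp
  set KL : ℝ := ∫ z, llr P Q z ∂P with hKLdef
  have hKL : ∫ z, g z * Real.log (g z) ∂Q = KL := by
    have := MeasureTheory.integral_rnDeriv_smul h (f := llr P Q)
    rw [hKLdef]
    simpa [llr_def, smul_eq_mul] using this
  have hKLint : Integrable (fun z => g z * Real.log (g z)) Q := by
    have := (MeasureTheory.integrable_rnDeriv_smul_iff h (f := llr P Q)).mpr hi
    simpa [llr_def, smul_eq_mul] using this
  set ψ : Z → ℝ := fun z => 3*(g z - 1)^2/(2*(g z + 2)) with hψdef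
  have hψm : Measurable ψ := by
    apply Measurable.div
    · fun_prop
    · fun_prop
  have hψ0 : ∀ z, 0 ≤ ψ z := fun z =>
    div_nonneg (by positivity) (by linarith [hg0 z])
  have hbint : Integrable (fun z => (3/2) * (g z + 1)) Q := by
    exact (hgint.add (integrable_const 1)).const_mul (3/2)
  have hψint : Integrable ψ Q := by
    refine Integrable.mono hbint hψm.aestronglyMeasurable (ae_of_all _ fun z => ?_)
    rw [Real.norm_of_nonneg (hψ0 z), Real.norm_of_nonneg (by linarith [hg0 z])]
    rw [hψdef, div_le_iff₀ (by linarith [hg0 z])]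
    nlinarith [hg0 z]
  have hsubint : Integrable (fun z => g z * Real.log (g z) - g z) Q := by
    exact hKLint.sub hgint
  have hrhsint : Integrable (fun z => g z * Real.log (g z) - g z + 1) Q := by
    exact hsubint.add (integrable_const 1)
  have hI3 : ∫ z, ψ z ∂Q ≤ KL := by
    have hmono := integral_mono hψint hrhsint (fun z => key_ineq (hg0 z))
    have : ∫ z, (g z * Real.log (g z) - g z + 1) ∂Q = KL := by
      rw [integral_add hsubint (integrable_const 1),
        integral_sub hKLint hgint, hKL, hg1, integral_const]
      simp
    linarith [hmono, this.symm.le, this.le]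
  have hKL0 : 0 ≤ KL := le_trans (integral_nonneg hψ0) hI3
  set T : ℝ := ∫ z, |g z - 1| ∂Q with hTdef
  have hTint : Integrable (fun z => |g z - 1|) Q := (hgint.sub (integrable_const 1)).abs
  have hT0 : 0 ≤ T := integral_nonneg fun z => abs_nonneg _
  have hTlam : ∀ L : ℝ, 0 < L → T ≤ (3*L)⁻¹ * (∫ z, ψ z ∂Q) + L/2 * 3 := by
    intro L hL
    have hptw : ∀ z, |g z - 1| ≤ (3*L)⁻¹ * ψ z + L/2 * (g z + 2) := by
      intro z
      have h2 : (0:ℝ) < g z + 2 := by linarith [hg0 z]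
      rw [hψdef]
      rw [show (3*L)⁻¹ * (3*(g z-1)^2/(2*(g z+2))) = (g z-1)^2/(2*L*(g z+2)) by
        field_simp]
      rw [← sub_le_iff_le_add, le_div_iff₀ (by positivity)]
      nlinarith [sq_nonneg (|g z - 1| - L*(g z + 2)), sq_abs (g z - 1), abs_nonneg (g z - 1)]
    have hint2a : Integrable (fun z => (3*L)⁻¹ * ψ z) Q := by exact hψint.const_mul _
    have hint2c : Integrable (fun z => g z + 2) Q := by exact hgint.add (integrable_const 2)
    have hint2b : Integrable (fun z => L/2 * (g z + 2)) Q := by exact hint2c.const_mul (L/2)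
    have := integral_mono hTint (by exact hint2a.add hint2b) hptw
    rw [integral_add hint2a hint2b, integral_const_mul, integral_const_mul,
      integral_add hgint (integrable_const 2), hg1, integral_const] at this
    simp [measure_univ] at this
    rw [show ((3:ℝ)*L)⁻¹ = L⁻¹ * 3⁻¹ by rw [mul_inv, mul_comm]]
    linarith [this]
  have hT2 : T^2 ≤ 2*KL := by
    rcases eq_or_lt_of_le hT0 with hT | hT
    · rw [← hT]; nlinarith [hKL0]
    · have hl := hTlam (T/3) (by positivity)
      have h3 : (3*(T/3)) = T := by ring
      rw [h3] at hl
      have hu : T * T⁻¹ = 1 := mul_inv_cancel₀ hT.ne'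
      nlinarith [hI3, hl, hu, hT, integral_nonneg (μ := Q) (f := ψ) hψ0]
  have hδ : ∫ z, max (g z - 1) 0 ∂Q = T/2 := by
    have hptw : ∀ z, max (g z - 1) 0 = ((g z - 1) + |g z - 1|)/2 := by
      intro z
      rcases le_total (g z - 1) 0 with hh | hh
      · rw [max_eq_right hh, abs_of_nonpos hh]; ring
      · rw [max_eq_left hh, abs_of_nonneg hh]; ring
    simp only [hptw]
    have hga : Integrable (fun z => g z - 1) Q := by exact hgint.sub (integrable_const 1)
    rw [integral_div, integral_add hga hTint,
      integral_sub hgint (integrable_const 1), hg1, integral_const]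
    simp [measure_univ]
    rfl
  refine ⟨hKL0, ?_⟩
  rw [hδ]
  rw [Real.le_sqrt (by linarith) (by linarith)]
  nlinarith [hT2]

/-- Let `μ = P_X ⊗ π₀`, `ν = P_X ⊗ π_θ` with `ν ≪ μ` and importance weight
`w = dν/dμ ≤ w_m` everywhere. If the reward `f` takes values in `[−1,0]`, then
`Var_μ(w·f) ≤ w_m·√(min(D(ν‖μ), D(μ‖ν))/2) + 1`.
(When both divergences are `∞` the claim is vacuous, captured by the finiteness hypothesis.) -/
theorem stmt_6 {X A : Type*} [MeasurableSpace X] [MeasurableSpace A]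
    (PX : Measure X) [IsProbabilityMeasure PX]
    (π0 πθ : Kernel X A) [IsMarkovKernel π0] [IsMarkovKernel πθ]
    (f : X × A → ℝ) (hf : Measurable f)
    (hfb : ∀ p, f p ∈ Set.Icc (-1 : ℝ) 0)
    (μ ν : Measure (X × A)) (hμ : μ = PX ⊗ₘ π0) (hν : ν = PX ⊗ₘ πθ)
    (hac : ν ≪ μ)
    (w : X × A → ℝ) (hw : w = fun p => (ν.rnDeriv μ p).toReal)
    (w_m : ℝ) (hwm : ∀ p, ν.rnDeriv μ p ≤ ENNReal.ofReal w_m)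
    (hfin : min (klDiv ν μ) (klDiv μ ν) ≠ ⊤) :
    (∫ p, (w p * f p) ^ 2 ∂μ) - (∫ p, w p * f p ∂μ) ^ 2
      ≤ w_m * Real.sqrt ((min (klDiv ν μ) (klDiv μ ν)).toReal / 2) + 1 := by
  haveI hPμ : IsProbabilityMeasure μ := by rw [hμ]; infer_instance
  haveI hPν : IsProbabilityMeasure ν := by rw [hν]; infer_instance
  have hweq : ∀ p, w p = (ν.rnDeriv μ p).toReal := fun p => by rw [hw]
  -- basic facts about w
  have hwm1 : 1 ≤ w_m := by
    have h1 : ∫⁻ p, ν.rnDeriv μ p ∂μ = ν Set.univ := Measure.lintegral_rnDeriv hac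
    have h2 : ∫⁻ p, ν.rnDeriv μ p ∂μ ≤ ENNReal.ofReal w_m := by
      calc ∫⁻ p, ν.rnDeriv μ p ∂μ ≤ ∫⁻ _, ENNReal.ofReal w_m ∂μ := lintegral_mono hwm
        _ = ENNReal.ofReal w_m := by simp [measure_univ]
    rw [h1, measure_univ] at h2
    by_contra hlt
    push_neg at hlt
    exact absurd h2 (not_le.mpr (ENNReal.ofReal_lt_one.mpr hlt))
  have hwm0 : (0:ℝ) ≤ w_m := by linarith
  have hfinp : ∀ p, ν.rnDeriv μ p ≠ ⊤ := fun p => ((hwm p).trans_lt ENNReal.ofReal_lt_top).ne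
  have hg0 : ∀ p, 0 ≤ w p := fun p => by rw [hweq]; exact ENNReal.toReal_nonneg
  have hgle : ∀ p, w p ≤ w_m := fun p => by
    rw [hweq]; exact ENNReal.toReal_le_of_le_ofReal hwm0 (hwm p)
  have hgm : Measurable w := by rw [hw]; exact (Measure.measurable_rnDeriv ν μ).ennreal_toReal
  have hgint : Integrable w μ := by rw [hw]; exact Measure.integrable_toReal_rnDeriv
  have hg1 : ∫ p, w p ∂μ = 1 := by
    simp only [hweq]
    rw [Measure.integral_toReal_rnDeriv hac]; simp
  have hf1 : ∀ p, -1 ≤ f p := fun p => (hfb p).1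
  have hf2 : ∀ p, f p ≤ 0 := fun p => (hfb p).2
  have hfsq : ∀ p, (f p)^2 ≤ 1 := fun p => by nlinarith [hf1 p, hf2 p]
  -- integrability
  have hint1 : Integrable (fun p => (w p * f p)^2) μ := by
    refine Integrable.mono' (integrable_const (w_m^2)) ?_ (ae_of_all _ fun p => ?_)
    · exact (((hgm.mul hf).pow_const 2)).aestronglyMeasurable
    · rw [Real.norm_of_nonneg (sq_nonneg _)]
      nlinarith [mul_nonneg (sq_nonneg (w p)) (by linarith [hfsq p] : (0:ℝ) ≤ 1 - (f p)^2),
        mul_nonneg (by linarith [hgle p] : (0:ℝ) ≤ w_m - w p)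
          (by linarith [hg0 p] : (0:ℝ) ≤ w_m + w p)]
  have hint2 : Integrable (fun p => w p * (f p)^2) μ := by
    refine Integrable.mono' (integrable_const w_m) ?_ (ae_of_all _ fun p => ?_)
    · exact (hgm.mul (hf.pow_const 2)).aestronglyMeasurable
    · rw [Real.norm_of_nonneg (mul_nonneg (hg0 p) (sq_nonneg _))]
      nlinarith [hg0 p, hgle p, hfsq p, sq_nonneg (f p)]
  have hint4 : Integrable (fun p => max (w p - 1) 0) μ := by
    refine Integrable.mono' (integrable_const w_m) ?_ (ae_of_all _ fun p => ?_)
    · exact ((hgm.sub measurable_const).max measurable_const).aestronglyMeasurable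
    · rw [Real.norm_of_nonneg (le_max_right _ _)]
      exact max_le (by linarith [hgle p]) hwm0
  have hint5 : Integrable (fun p => max (1 - w p) 0) μ := by
    refine Integrable.mono' (integrable_const 1) ?_ (ae_of_all _ fun p => ?_)
    · exact ((measurable_const.sub hgm).max measurable_const).aestronglyMeasurable
    · rw [Real.norm_of_nonneg (le_max_right _ _)]
      exact max_le (by linarith [hg0 p]) zero_le_one
  -- the key bound on the positive part integral
  have hδle : ∫ p, max (w p - 1) 0 ∂μ
      ≤ Real.sqrt ((min (klDiv ν μ) (klDiv μ ν)).toReal / 2) := by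
    rcases min_cases (klDiv ν μ) (klDiv μ ν) with ⟨hmin, _⟩ | ⟨hmin, _⟩
    · -- min is klDiv ν μ
      rw [hmin] at hfin ⊢
      have hc : ν ≪ μ ∧ Integrable (llr ν μ) ν := by
        by_contra hcc
        rw [klDiv, if_neg hcc] at hfin
        exact hfin rfl
      obtain ⟨hKL0, hP⟩ := pinsker_aux ν μ hac hc.2
      rw [klDiv, if_pos hc, ENNReal.toReal_ofReal hKL0]
      refine le_trans (le_of_eq ?_) hP
      exact integral_congr_ae (ae_of_all _ fun p => by simp only [hweq])
    · -- min is klDiv μ ν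
      rw [hmin] at hfin ⊢
      have hc : μ ≪ ν ∧ Integrable (llr μ ν) μ := by
        by_contra hcc
        rw [klDiv, if_neg hcc] at hfin
        exact hfin rfl
      obtain ⟨hKL0, hP⟩ := pinsker_aux μ ν hc.1 hc.2
      rw [klDiv, if_pos hc, ENNReal.toReal_ofReal hKL0]
      -- translate ∫ max(w-1,0) dμ into ∫ max(dμ/dν - 1, 0) dν
      have e1 : ∫ p, max (w p - 1) 0 ∂μ = ∫ p, max (1 - w p) 0 ∂μ := by
        have hdiff : ∀ p, max (w p - 1) 0 - max (1 - w p) 0 = w p - 1 := by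
          intro p
          rcases le_total (w p) 1 with h | h
          · rw [max_eq_right (by linarith), max_eq_left (by linarith)]; ring
          · rw [max_eq_left (by linarith), max_eq_right (by linarith)]; ring
        have h0 : ∫ p, (max (w p - 1) 0 - max (1 - w p) 0) ∂μ = 0 := by
          refine Eq.trans (integral_congr_ae (ae_of_all _ fun p => hdiff p)) ?_
          rw [integral_sub hgint (integrable_const 1), hg1, integral_const]
          simp [measure_univ]
        rw [integral_sub hint4 hint5] at h0
        linarith
      have e2 : ∫ p, max ((μ.rnDeriv ν p).toReal - 1) 0 ∂ν
          = ∫ p, (ν.rnDeriv μ p).toReal • max ((μ.rnDeriv ν p).toReal - 1) 0 ∂μ :=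
        (MeasureTheory.integral_rnDeriv_smul hac
          (f := fun p => max ((μ.rnDeriv ν p).toReal - 1) 0)).symm
      have e3 : ∫ p, (ν.rnDeriv μ p).toReal • max ((μ.rnDeriv ν p).toReal - 1) 0 ∂μ
          = ∫ p, max (1 - w p) 0 ∂μ := by
        refine integral_congr_ae ?_
        have hpos : ∀ᵐ p ∂μ, 0 < ν.rnDeriv μ p := Measure.rnDeriv_pos' hc.1
        have hinv : (μ.rnDeriv ν)⁻¹ =ᵐ[μ] ν.rnDeriv μ := Measure.inv_rnDeriv hc.1
        filter_upwards [hpos, hinv] with p hp hip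
        have hr : μ.rnDeriv ν p = (ν.rnDeriv μ p)⁻¹ := by
          rw [← hip]; simp
        have hx : 0 < (ν.rnDeriv μ p).toReal := ENNReal.toReal_pos hp.ne' (hfinp p)
        rw [hr, ENNReal.toReal_inv, hweq p]
        set x : ℝ := (ν.rnDeriv μ p).toReal with hxdef
        rcases le_total x 1 with h | h
        · have hinv1 : 1 ≤ x⁻¹ := by
            rw [show (x:ℝ)⁻¹ = 1/x by ring, le_div_iff₀ hx]; linarith
          rw [max_eq_left (by linarith : (0:ℝ) ≤ x⁻¹ - 1),
            max_eq_left (by linarith : (0:ℝ) ≤ 1 - x), smul_eq_mul,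
            mul_sub, mul_inv_cancel₀ hx.ne']
          ring
        · have hinv1 : x⁻¹ ≤ 1 := by
            rw [show (x:ℝ)⁻¹ = 1/x by ring, div_le_one hx]; linarith
          rw [max_eq_right (by linarith : x⁻¹ - 1 ≤ (0:ℝ)),
            max_eq_right (by linarith : 1 - x ≤ (0:ℝ)), smul_eq_mul, mul_zero]
      rw [e1, ← e3, ← e2]
      exact hP
  -- pointwise bound
  have hptw : ∀ p, (w p * f p)^2 ≤ w p * (f p)^2 + w_m * max (w p - 1) 0 := by
    intro p
    rcases le_total (w p) 1 with h | h
    · rw [max_eq_right (by linarith)]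
      nlinarith [mul_nonneg (mul_nonneg (hg0 p) (sq_nonneg (f p)))
        (by linarith : (0:ℝ) ≤ 1 - w p)]
    · rw [max_eq_left (by linarith)]
      have h1 : w p * (f p)^2 ≤ w_m := by nlinarith [hg0 p, hgle p, hfsq p, sq_nonneg (f p)]
      nlinarith [mul_le_mul_of_nonneg_right h1 (by linarith : (0:ℝ) ≤ w p - 1)]
  -- assembly
  have hA : ∫ p, (w p * f p)^2 ∂μ
      ≤ ∫ p, (w p * (f p)^2 + w_m * max (w p - 1) 0) ∂μ :=
    integral_mono hint1 (by exact hint2.add (hint4.const_mul w_m)) hptw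
  have hB : ∫ p, (w p * (f p)^2 + w_m * max (w p - 1) 0) ∂μ
      = (∫ p, w p * (f p)^2 ∂μ) + w_m * ∫ p, max (w p - 1) 0 ∂μ := by
    rw [integral_add hint2 (by exact hint4.const_mul w_m), integral_const_mul]
  have hC : ∫ p, w p * (f p)^2 ∂μ ≤ 1 := by
    rw [← hg1]
    refine integral_mono hint2 hgint fun p => ?_
    nlinarith [hg0 p, hfsq p, sq_nonneg (f p)]
  have hD : w_m * ∫ p, max (w p - 1) 0 ∂μ
      ≤ w_m * Real.sqrt ((min (klDiv ν μ) (klDiv μ ν)).toReal / 2) :=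
    mul_le_mul_of_nonneg_left hδle hwm0
  nlinarith [hA, hB, hC, hD, sq_nonneg (∫ p, w p * f p ∂μ)]
end

section
/- Let μ = P_X ⊗ π_0 and ν = P_X ⊗ π_θ be joint probability measures on contexts and actions with ν ≪ μ and importance weight w = dν/dμ satisfying w ≤ w_m everywhere for some finite w_m. Let the reward function f take values in [−1, 0], define the true risk R(π_θ) = E_ν[f], and for n i.i.d. samples (X_1,A_1),…,(X_n,A_n) drawn from μ define the inverse-propensity-score empirical risk R̂(π_θ, S) = (1/n) Σ_{i=1}^n f(X_i,A_i)·w(X_i,A_i). Then for any δ ∈ (0,1), with probability at least 1−δ over the sample, R(π_θ) ≤ R̂(π_θ, S) + w_m·log(1/δ)/(3n) + √((w_m·√(2·min(D(ν‖μ), D(μ‖ν))) + 2)·log(1/δ)/n). -/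
open MeasureTheory ProbabilityTheory Real
open scoped ENNReal Classical ProbabilityTheory

section AuxLemmas


/-- helper: `F 0 ≤ F x` for `0 ≤ x` when derivative is nonneg on `[0,∞)`. -/
private lemma mono_aux {F F' : ℝ → ℝ} (hF : ∀ x, HasDerivAt F (F' x) x)
    (h0 : ∀ x, 0 ≤ x → 0 ≤ F' x) {x : ℝ} (hx : 0 ≤ x) : F 0 ≤ F x := by
  have hm : MonotoneOn F (Set.Ici 0) := by
    refine monotoneOn_of_deriv_nonneg (convex_Ici 0)
      (fun y _ => (hF y).continuousAt.continuousWithinAt)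
      (fun y _ => (hF y).differentiableAt.differentiableWithinAt) ?_
    intro y hy
    rw [interior_Ici] at hy
    rw [(hF y).deriv]
    exact h0 y hy.le
  exact hm Set.self_mem_Ici hx hx

/-- helper: `F 0 ≤ F x` for `x ≤ 0` when derivative is nonpos on `(-∞,0]`. -/
private lemma anti_aux {F F' : ℝ → ℝ} (hF : ∀ x, HasDerivAt F (F' x) x)
    (h0 : ∀ x, x ≤ 0 → F' x ≤ 0) {x : ℝ} (hx : x ≤ 0) : F 0 ≤ F x := by
  have hm : AntitoneOn F (Set.Iic 0) := by
    refine antitoneOn_of_deriv_nonpos (convex_Iic 0)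
      (fun y _ => (hF y).continuousAt.continuousWithinAt)
      (fun y _ => (hF y).differentiableAt.differentiableWithinAt) ?_
    intro y hy
    rw [interior_Iic] at hy
    rw [(hF y).deriv]
    exact h0 y hy.le
  exact hm hx Set.self_mem_Iic hx

/-- `e^u ≤ 1 + u + u²/2` for `u ≤ 0`. -/
lemma exp_le_quad_of_nonpos {u : ℝ} (hu : u ≤ 0) : Real.exp u ≤ 1 + u + u^2/2 := by
  have h := anti_aux (F := fun x => 1 + x + x^2/2 - Real.exp x)
    (F' := fun x => 1 + x - Real.exp x) ?_ ?_ hu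
  · simp only [Real.exp_zero] at h; nlinarith
  · intro x
    have : HasDerivAt (fun x : ℝ => 1 + x + x^2/2 - Real.exp x) (0 + 1 + (2*x^1)/2 - Real.exp x) x := by
      exact (((hasDerivAt_const x (1:ℝ)).add (hasDerivAt_id x)).add
        ((hasDerivAt_pow 2 x).div_const 2)).sub (Real.hasDerivAt_exp x)
    convert this using 1; simp
  · intro x hx
    have := Real.add_one_le_exp x
    show 1 + x - Real.exp x ≤ 0
    linarith

/-- `c²/2 ≤ e^c - 1 - c` for `0 ≤ c`. -/
lemma quad_le_phi {c : ℝ} (hc : 0 ≤ c) : c^2/2 ≤ Real.exp c - 1 - c := by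
  have h := mono_aux (F := fun x => Real.exp x - 1 - x - x^2/2)
    (F' := fun x => Real.exp x - 1 - x) ?_ ?_ hc
  · simp only [Real.exp_zero] at h; nlinarith
  · intro x
    have : HasDerivAt (fun x : ℝ => Real.exp x - 1 - x - x^2/2)
        (Real.exp x - 0 - 1 - (2*x^1)/2) x :=
      (((Real.hasDerivAt_exp x).sub (hasDerivAt_const x 1)).sub (hasDerivAt_id x)).sub
        ((hasDerivAt_pow 2 x).div_const 2)
    convert this using 1; simp
  · intro x hx
    have := Real.add_one_le_exp x
    show 0 ≤ Real.exp x - 1 - x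
    linarith

/-- Bennett pointwise: for `t ≤ 1`, `0 ≤ c`: `e^{ct} ≤ 1 + ct + t²(e^c - 1 - c)`. -/
lemma bennett_pt {c t : ℝ} (hc : 0 ≤ c) (ht : t ≤ 1) :
    Real.exp (c*t) ≤ 1 + c*t + t^2*(Real.exp c - 1 - c) := by
  rcases le_or_gt t 0 with ht0 | ht0
  · have h1 : Real.exp (c*t) ≤ 1 + c*t + (c*t)^2/2 :=
      exp_le_quad_of_nonpos (mul_nonpos_of_nonneg_of_nonpos hc ht0)
    have h2 : c^2/2 ≤ Real.exp c - 1 - c := quad_le_phi hc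
    nlinarith [sq_nonneg t, sq_nonneg (c*t)]
  · -- 0 < t ≤ 1 : monotonicity in c
    have key : ∀ x, 0 ≤ x → Real.exp (x*t) - 1 - x*t ≤ t^2*(Real.exp x - 1 - x) := by
      intro x hx
      have h := mono_aux (F := fun y => t^2*(Real.exp y - 1 - y) - (Real.exp (y*t) - 1 - y*t))
        (F' := fun y => t^2*(Real.exp y - 1) - t*(Real.exp (y*t) - 1)) ?_ ?_ hx
      · simp only [mul_zero, zero_mul, Real.exp_zero] at h
        have h0 : t^2*(Real.exp 0 - 1 - 0) - (Real.exp (0*t) - 1 - 0*t) = 0 := by simp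
        nlinarith [h]
      · intro y
        have e1 : HasDerivAt (fun y : ℝ => Real.exp y - 1 - y) (Real.exp y - 0 - 1) y :=
          ((Real.hasDerivAt_exp y).sub (hasDerivAt_const y 1)).sub (hasDerivAt_id y)
        have e2 : HasDerivAt (fun y : ℝ => Real.exp (y*t) - 1 - y*t)
            (Real.exp (y*t) * (1*t) - 0 - 1*t) y := by
          have hyt : HasDerivAt (fun y : ℝ => y*t) (1*t) y := (hasDerivAt_id y).mul_const t
          exact ((hyt.exp).sub (hasDerivAt_const y 1)).sub hyt
        have := ((e1.const_mul (t^2)).sub e2)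
        exact this.congr_deriv (by ring)
      · intro y hy
        have hconv : Real.exp (y*t) ≤ (1-t) + t*Real.exp y := by
          have := convexOn_exp.2 (Set.mem_univ 0) (Set.mem_univ y)
            (by linarith : (0:ℝ) ≤ 1 - t) ht0.le (by ring)
          simpa [smul_eq_mul, mul_comm] using this
        show 0 ≤ t^2*(Real.exp y - 1) - t*(Real.exp (y*t) - 1)
        have h1 : Real.exp (y*t) - 1 ≤ t*(Real.exp y - 1) := by linarith
        have h2 : t*(Real.exp (y*t) - 1) ≤ t*(t*(Real.exp y - 1)) :=
          mul_le_mul_of_nonneg_left h1 ht0.le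
        nlinarith
    have := key c hc
    linarith

/-- `(e^c - 1 - c) * (2*(1 - c/3)) ≤ c²` for `0 ≤ c`. -/
lemma phi_upper {c : ℝ} (hc : 0 ≤ c) :
    (Real.exp c - 1 - c) * (2*(1 - c/3)) ≤ c^2 := by
  -- triple monotonicity chain
  have hs : ∀ x, 0 ≤ x → 0 ≤ 1 + (x-1)*Real.exp x := by
    intro x hx
    have h := mono_aux (F := fun y => 1 + (y-1)*Real.exp y)
      (F' := fun y => y*Real.exp y) ?_ ?_ hx
    · simpa using h
    · intro y
      have : HasDerivAt (fun y : ℝ => 1 + (y-1)*Real.exp y)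
          (0 + ((1 - 0)*Real.exp y + (y-1)*Real.exp y)) y :=
        (hasDerivAt_const y 1).add
          (((hasDerivAt_id y).sub (hasDerivAt_const y 1)).mul (Real.hasDerivAt_exp y))
      convert this using 1; ring
    · intro y hy
      exact mul_nonneg hy (Real.exp_nonneg y)
  have hr' : ∀ x, 0 ≤ x →
      0 ≤ 2*x + (2/3)*(Real.exp x - 1 - x) - 2*(1 - x/3)*(Real.exp x - 1) := by
    intro x hx
    have h := mono_aux
      (F := fun y => 2*y + (2/3)*(Real.exp y - 1 - y) - 2*(1 - y/3)*(Real.exp y - 1))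
      (F' := fun y => (2/3)*(1 + (y-1)*Real.exp y)) ?_ ?_ hx
    · simpa using h
    · intro y
      have e1 : HasDerivAt (fun y : ℝ => Real.exp y - 1 - y) (Real.exp y - 0 - 1) y :=
        ((Real.hasDerivAt_exp y).sub (hasDerivAt_const y 1)).sub (hasDerivAt_id y)
      have e2 : HasDerivAt (fun y : ℝ => 2*(1 - y/3)) (2*(0 - 1/3)) y := by
        exact ((hasDerivAt_const y (1:ℝ)).sub ((hasDerivAt_id y).div_const 3)).const_mul 2
      have e3 : HasDerivAt (fun y : ℝ => Real.exp y - 1) (Real.exp y - 0) y :=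
        (Real.hasDerivAt_exp y).sub (hasDerivAt_const y 1)
      have h2 := (((hasDerivAt_id y).const_mul 2).add (e1.const_mul (2/3))).sub (e2.mul e3)
      have e : (2/3)*(1 + (y-1)*Real.exp y)
          = 2*1 + (2/3)*(Real.exp y - 0 - 1)
            - (2*(0 - 1/3) * (Real.exp y - 1) + 2*(1 - y/3) * (Real.exp y - 0)) := by ring
      show HasDerivAt (fun y => 2*y + (2/3)*(Real.exp y - 1 - y) - 2*(1 - y/3)*(Real.exp y - 1))
        ((2/3)*(1 + (y-1)*Real.exp y)) y
      rw [e]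
      exact h2
    · intro y hy
      exact mul_nonneg (by norm_num) (hs y hy)
  have h := mono_aux (F := fun y => y^2 - 2*(1 - y/3)*(Real.exp y - 1 - y))
    (F' := fun y => 2*y + (2/3)*(Real.exp y - 1 - y) - 2*(1 - y/3)*(Real.exp y - 1)) ?_ ?_ hc
  · simp only [Real.exp_zero] at h
    nlinarith [h]
  · intro y
    have e1 : HasDerivAt (fun y : ℝ => Real.exp y - 1 - y) (Real.exp y - 0 - 1) y :=
      ((Real.hasDerivAt_exp y).sub (hasDerivAt_const y 1)).sub (hasDerivAt_id y)
    have e2 : HasDerivAt (fun y : ℝ => 2*(1 - y/3)) (2*(0 - 1/3)) y :=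
      ((hasDerivAt_const y (1:ℝ)).sub ((hasDerivAt_id y).div_const 3)).const_mul 2
    have := ((hasDerivAt_pow 2 y).sub (e2.mul e1))
    exact this.congr_deriv (by ring)
  · intro y hy
    have := hr' y hy
    show 0 ≤ 2*y + (2/3)*(Real.exp y - 1 - y) - 2*(1 - y/3)*(Real.exp y - 1)
    linarith


private lemma mono_Ici {F F' : ℝ → ℝ} {a : ℝ} (hF : ∀ x, a ≤ x → HasDerivAt F (F' x) x)
    (h0 : ∀ x, a ≤ x → 0 ≤ F' x) {x : ℝ} (hx : a ≤ x) : F a ≤ F x := by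
  have hm : MonotoneOn F (Set.Ici a) := by
    refine monotoneOn_of_deriv_nonneg (convex_Ici a)
      (fun y hy => (hF y hy).continuousAt.continuousWithinAt)
      (fun y hy => (hF y (le_of_lt (by simpa [interior_Ici] using hy))).differentiableAt.differentiableWithinAt) ?_
    intro y hy
    rw [interior_Ici] at hy
    rw [(hF y hy.le).deriv]
    exact h0 y hy.le
  exact hm Set.self_mem_Ici hx hx

private lemma mono_Ioc {F F' : ℝ → ℝ} {a b : ℝ} (hF : ∀ x, x ∈ Set.Ioc a b → HasDerivAt F (F' x) x)
    (h0 : ∀ x, x ∈ Set.Ioc a b → 0 ≤ F' x) {x : ℝ} (hx : x ∈ Set.Ioc a b) : F x ≤ F b := by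
  have hab : a < b := lt_of_lt_of_le hx.1 hx.2
  have hm : MonotoneOn F (Set.Ioc a b) := by
    refine monotoneOn_of_deriv_nonneg (convex_Ioc a b)
      (fun y hy => (hF y hy).continuousAt.continuousWithinAt)
      (fun y hy => (hF y ?_).differentiableAt.differentiableWithinAt) ?_
    · rw [interior_Ioc] at hy; exact ⟨hy.1, hy.2.le⟩
    · intro y hy
      rw [interior_Ioc] at hy
      rw [(hF y ⟨hy.1, hy.2.le⟩).deriv]
      exact h0 y ⟨hy.1, hy.2.le⟩
  exact hm hx ⟨hab, le_rfl⟩ hx.2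

private lemma anti_Ioc {F F' : ℝ → ℝ} {a b : ℝ} (hF : ∀ x, x ∈ Set.Ioc a b → HasDerivAt F (F' x) x)
    (h0 : ∀ x, x ∈ Set.Ioc a b → F' x ≤ 0) {x : ℝ} (hx : x ∈ Set.Ioc a b) : F b ≤ F x := by
  have hab : a < b := lt_of_lt_of_le hx.1 hx.2
  have hm : AntitoneOn F (Set.Ioc a b) := by
    refine antitoneOn_of_deriv_nonpos (convex_Ioc a b)
      (fun y hy => (hF y hy).continuousAt.continuousWithinAt)
      (fun y hy => (hF y ?_).differentiableAt.differentiableWithinAt) ?_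
    · rw [interior_Ioc] at hy; exact ⟨hy.1, hy.2.le⟩
    · intro y hy
      rw [interior_Ioc] at hy
      rw [(hF y ⟨hy.1, hy.2.le⟩).deriv]
      exact h0 y ⟨hy.1, hy.2.le⟩
  exact hm hx ⟨hab, le_rfl⟩ hx.2

private lemma hasDerivAt_G {x : ℝ} (hx : 0 < x) :
    HasDerivAt (fun y : ℝ => (4*y+4)*Real.log y - 8*(y-1))
      (4*Real.log x + (4*x+4)/x - 8) x := by
  have h1 : HasDerivAt (fun y : ℝ => (4*y+4)) 4 x := by
    simpa using ((hasDerivAt_id x).const_mul 4).add_const 4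
  have h2 : HasDerivAt (fun y : ℝ => Real.log y) x⁻¹ x := Real.hasDerivAt_log hx.ne'
  have h3 := h1.mul h2
  have h4 : HasDerivAt (fun y : ℝ => 8*(y-1)) 8 x := by
    simpa using ((hasDerivAt_id x).sub_const 1).const_mul 8
  have h5 := h3.sub h4
  have e : 4*Real.log x + (4*x+4)/x - 8 = 4 * Real.log x + (4*x+4) * x⁻¹ - 8 := by
    field_simp
  rw [e]
  exact h5

private lemma G_nonneg {x : ℝ} (hx : 1 ≤ x) :
    0 ≤ (4*x+4)*Real.log x - 8*(x-1) := by
  have key := mono_Ici (F := fun y => (4*y+4)*Real.log y - 8*(y-1))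
    (F' := fun y => 4*Real.log y + (4*y+4)/y - 8)
    (fun y hy => hasDerivAt_G (lt_of_lt_of_le one_pos hy))
    (fun y hy => ?_) hx
  · simpa using key
  · have hy0 : (0:ℝ) < y := lt_of_lt_of_le one_pos hy
    have hlog : 1 - y⁻¹ ≤ Real.log y := Real.one_sub_inv_le_log_of_pos hy0
    show 0 ≤ 4*Real.log y + (4*y+4)/y - 8
    have e : (4*y+4)/y = 4 + 4*y⁻¹ := by field_simp
    rw [e]
    nlinarith [hlog]

private lemma G_nonpos {x : ℝ} (hx : x ∈ Set.Ioc (0:ℝ) 1) :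
    (4*x+4)*Real.log x - 8*(x-1) ≤ 0 := by
  have key := mono_Ioc (F := fun y => (4*y+4)*Real.log y - 8*(y-1))
    (F' := fun y => 4*Real.log y + (4*y+4)/y - 8)
    (fun y hy => hasDerivAt_G hy.1)
    (fun y hy => ?_) hx
  · simpa using key
  · have hy0 : (0:ℝ) < y := hy.1
    have hlog : 1 - y⁻¹ ≤ Real.log y := Real.one_sub_inv_le_log_of_pos hy0
    show 0 ≤ 4*Real.log y + (4*y+4)/y - 8
    have e : (4*y+4)/y = 4 + 4*y⁻¹ := by field_simp
    rw [e]
    nlinarith [hlog]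

private lemma hasDerivAt_F {x : ℝ} (hx : 0 < x) :
    HasDerivAt (fun y : ℝ => (2*y+4)*(y*Real.log y - y + 1) - 3*(y-1)^2)
      ((4*x+4)*Real.log x - 8*(x-1)) x := by
  have h1 : HasDerivAt (fun y : ℝ => (2*y+4)) 2 x := by
    simpa using ((hasDerivAt_id x).const_mul 2).add_const 4
  have hlog : HasDerivAt (fun y : ℝ => Real.log y) x⁻¹ x := Real.hasDerivAt_log hx.ne'
  have h2 : HasDerivAt (fun y : ℝ => y*Real.log y - y + 1)
      (1*Real.log x + x*x⁻¹ - 1) x :=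
    (((hasDerivAt_id x).mul hlog).sub (hasDerivAt_id x)).add_const 1
  have h3 := h1.mul h2
  have h4 : HasDerivAt (fun y : ℝ => 3*(y-1)^2) (3*(2*(x-1)^1*1)) x := by
    exact (((hasDerivAt_id x).sub_const 1).pow 2).const_mul 3
  have h5 := h3.sub h4
  have e : (4*x+4)*Real.log x - 8*(x-1)
      = 2 * (x*Real.log x - x + 1) + (2*x+4) * (1*Real.log x + x*x⁻¹ - 1)
        - 3*(2*(x-1)^1*1) := by
    field_simp
    ring
  rw [e]
  exact h5

/-- Pinsker pointwise inequality: `3(x-1)² ≤ (2x+4)(x log x - x + 1)` for `x ≥ 0`. -/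
lemma pinsker_pt {x : ℝ} (hx : 0 ≤ x) :
    3*(x-1)^2 ≤ (2*x+4)*(x*Real.log x - x + 1) := by
  rcases eq_or_lt_of_le hx with h0 | h0
  · rw [← h0]; simp; norm_num
  rcases le_or_gt 1 x with h1 | h1
  · have key := mono_Ici (F := fun y => (2*y+4)*(y*Real.log y - y + 1) - 3*(y-1)^2)
      (F' := fun y => (4*y+4)*Real.log y - 8*(y-1))
      (fun y hy => hasDerivAt_F (lt_of_lt_of_le one_pos hy))
      (fun y hy => G_nonneg hy) h1
    simp only [Real.log_one] at key
    nlinarith [key]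
  · have key := anti_Ioc (F := fun y => (2*y+4)*(y*Real.log y - y + 1) - 3*(y-1)^2)
      (F' := fun y => (4*y+4)*Real.log y - 8*(y-1))
      (fun y hy => hasDerivAt_F hy.1)
      (fun y hy => G_nonpos hy) ⟨h0, h1.le⟩
    simp only [Real.log_one] at key
    nlinarith [key]




lemma xlogx_aux {x : ℝ} (hx : 0 ≤ x) : 0 ≤ x * Real.log x - x + 1 := by
  rcases eq_or_lt_of_le hx with h0 | h0
  · simp [← h0]
  · have hlog := Real.one_sub_inv_le_log_of_pos h0
    have h1 : x * (1 - x⁻¹) ≤ x * Real.log x := mul_le_mul_of_nonneg_left hlog hx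
    have h2 : x * (1 - x⁻¹) = x - 1 := by field_simp
    linarith [h2 ▸ h1]

lemma pinsker_l1 {Z : Type*} [MeasurableSpace Z] (P Q : Measure Z)
    [IsProbabilityMeasure P] [IsProbabilityMeasure Q]
    (hPQ : P ≪ Q) (hint : Integrable (llr P Q) P) :
    ∫ x, |(P.rnDeriv Q x).toReal - 1| ∂Q ≤ Real.sqrt (2 * ∫ z, llr P Q z ∂P) := by
  set W : Z → ℝ := fun x => (P.rnDeriv Q x).toReal with hW
  have hWmeas : Measurable W := (Measure.measurable_rnDeriv P Q).ennreal_toReal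
  have hW0 : ∀ x, 0 ≤ W x := fun x => ENNReal.toReal_nonneg
  have hWint : Integrable W Q := Measure.integrable_toReal_rnDeriv
  have hW1 : ∫ x, W x ∂Q = 1 := by
    rw [hW]; rw [Measure.integral_toReal_rnDeriv hPQ]; simp
  have hWlog : Integrable (fun x => W x * Real.log (W x)) Q := by
    have h := (MeasureTheory.integrable_rnDeriv_smul_iff hPQ).mpr hint
    simpa [llr, smul_eq_mul] using h
  have hIeq : ∫ z, llr P Q z ∂P = ∫ x, W x * Real.log (W x) ∂Q := by
    rw [← MeasureTheory.integral_rnDeriv_smul hPQ (f := llr P Q)]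
    simp [llr, smul_eq_mul]; rfl
  set h : Z → ℝ := fun x => W x * Real.log (W x) - W x + 1 with hh
  have hh0 : ∀ x, 0 ≤ h x := fun x => xlogx_aux (hW0 x)
  have hhmeas : Measurable h := ((hWmeas.mul (hWmeas.log)).sub hWmeas).add measurable_const
  have hhint : Integrable h Q := (hWlog.sub hWint).add (integrable_const 1)
  have hhI : ∫ x, h x ∂Q = ∫ z, llr P Q z ∂P := by
    simp only [hh]
    have hsub : Integrable (fun x => W x * Real.log (W x) - W x) Q := hWlog.sub hWint
    have hadd : ∫ x, (W x * Real.log (W x) - W x) + 1 ∂Q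
        = ∫ x, W x * Real.log (W x) - W x ∂Q + ∫ _, (1:ℝ) ∂Q :=
      integral_add hsub (integrable_const 1)
    rw [hadd, integral_sub hWlog hWint, hW1, ← hIeq]
    simp
  have hInonneg : 0 ≤ ∫ z, llr P Q z ∂P := by
    rw [← hhI]; exact integral_nonneg hh0
  set a : Z → ℝ := fun x => Real.sqrt ((2*W x + 4)/3) with ha
  set b : Z → ℝ := fun x => Real.sqrt (h x) with hb
  have ha0 : ∀ x, 0 ≤ (2*W x + 4)/3 := fun x => by have := hW0 x; positivity
  have ha2 : ∀ x, a x ^ 2 = (2*W x + 4)/3 := fun x => Real.sq_sqrt (ha0 x)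
  have hb2 : ∀ x, b x ^ 2 = h x := fun x => Real.sq_sqrt (hh0 x)
  have hameas : Measurable a := (((hWmeas.const_mul 2).add measurable_const).div_const 3).sqrt
  have hbmeas : Measurable b := hhmeas.sqrt
  have haint2 : Integrable (fun x => (2*W x + 4)/3) Q :=
    ((hWint.const_mul 2).add (integrable_const 4)).div_const 3
  have haℒ : MemLp a 2 Q := by
    refine (memLp_two_iff_integrable_sq hameas.aestronglyMeasurable).2 ?_
    refine haint2.congr (Filter.Eventually.of_forall fun x => (ha2 x).symm)
  have hbℒ : MemLp b 2 Q := by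
    refine (memLp_two_iff_integrable_sq hbmeas.aestronglyMeasurable).2 ?_
    exact hhint.congr (Filter.Eventually.of_forall fun x => (hb2 x).symm)
  have habint : Integrable (fun x => a x * b x) Q := by
    have hbd : Integrable (fun x => ((2*W x + 4)/3 + h x)/2) Q :=
      (haint2.add hhint).div_const 2
    refine Integrable.mono' hbd
      (hameas.mul hbmeas).aestronglyMeasurable
      (Filter.Eventually.of_forall fun x => ?_)
    have h1 : 0 ≤ a x := Real.sqrt_nonneg _
    have h2 : 0 ≤ b x := Real.sqrt_nonneg _
    rw [Real.norm_of_nonneg (mul_nonneg h1 h2)]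
    have h3 : 2 * (a x) * (b x) ≤ (a x)^2 + (b x)^2 := two_mul_le_add_sq _ _
    rw [ha2 x, hb2 x] at h3
    linarith
  have hpt : ∀ x, |W x - 1| ≤ a x * b x := by
    intro x
    have hp := pinsker_pt (hW0 x)
    have h1 : (W x - 1)^2 ≤ ((2*W x + 4)/3) * h x := by nlinarith [hp]
    calc |W x - 1| = Real.sqrt ((W x - 1)^2) := (Real.sqrt_sq_eq_abs _).symm
      _ ≤ Real.sqrt (((2*W x + 4)/3) * h x) := Real.sqrt_le_sqrt h1
      _ = a x * b x := Real.sqrt_mul (ha0 x) _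
  have step1 : ∫ x, |W x - 1| ∂Q ≤ ∫ x, a x * b x ∂Q :=
    integral_mono (hWint.sub (integrable_const 1)).abs habint hpt
  have hconj : (2:ℝ).HolderConjugate 2 := Real.holderConjugate_iff.mpr ⟨by norm_num, by norm_num⟩
  have step2 : ∫ x, a x * b x ∂Q
      ≤ (∫ x, a x ^ (2:ℝ) ∂Q) ^ ((1:ℝ)/2) * (∫ x, b x ^ (2:ℝ) ∂Q) ^ ((1:ℝ)/2) := by
    refine integral_mul_le_Lp_mul_Lq_of_nonneg hconj
      (Filter.Eventually.of_forall fun x => Real.sqrt_nonneg _)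
      (Filter.Eventually.of_forall fun x => Real.sqrt_nonneg _) ?_ ?_
    · simpa using haℒ
    · simpa using hbℒ
  have hrw2 : ∀ g : Z → ℝ, (∀ x, 0 ≤ g x) → ∀ x, g x ^ (2:ℝ) = g x ^ 2 := by
    intro g hg x
    rw [show (2:ℝ) = ((2:ℕ):ℝ) by norm_num, Real.rpow_natCast]
  have hia : ∫ x, a x ^ (2:ℝ) ∂Q = 2 := by
    have : ∫ x, a x ^ (2:ℝ) ∂Q = ∫ x, (2*W x + 4)/3 ∂Q := by
      refine integral_congr_ae (Filter.Eventually.of_forall fun x => ?_)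
      show a x ^ (2:ℝ) = (2*W x + 4)/3
      rw [hrw2 a (fun x => Real.sqrt_nonneg _) x, ha2 x]
    rw [this]
    rw [integral_div, integral_add (hWint.const_mul 2) (integrable_const 4),
      integral_const_mul, hW1]
    simp; norm_num
  have hib : ∫ x, b x ^ (2:ℝ) ∂Q = ∫ z, llr P Q z ∂P := by
    have : ∫ x, b x ^ (2:ℝ) ∂Q = ∫ x, h x ∂Q := by
      refine integral_congr_ae (Filter.Eventually.of_forall fun x => ?_)
      show b x ^ (2:ℝ) = h x
      rw [hrw2 b (fun x => Real.sqrt_nonneg _) x, hb2 x]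
    rw [this, hhI]
  calc ∫ x, |W x - 1| ∂Q ≤ _ := step1
    _ ≤ (∫ x, a x ^ (2:ℝ) ∂Q) ^ ((1:ℝ)/2) * (∫ x, b x ^ (2:ℝ) ∂Q) ^ ((1:ℝ)/2) := step2
    _ = (2:ℝ) ^ ((1:ℝ)/2) * (∫ z, llr P Q z ∂P) ^ ((1:ℝ)/2) := by rw [hia, hib]
    _ = Real.sqrt 2 * Real.sqrt (∫ z, llr P Q z ∂P) := by
        rw [Real.sqrt_eq_rpow, Real.sqrt_eq_rpow]
    _ = Real.sqrt (2 * ∫ z, llr P Q z ∂P) := (Real.sqrt_mul (by norm_num) _).symm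




lemma final_calc {M v L N : ℝ} (hM : 1 ≤ M) (hv : 1 ≤ v) (hL : 0 < L) (hN : 0 < N) :
    ∃ l : ℝ, 0 ≤ l ∧
      N * (v * (Real.exp (l*M) - 1 - l*M) / M^2)
        - l * (N * (M*L/(3*N) + Real.sqrt (2*v*L/N))) ≤ -L := by
  have hM0 : (0:ℝ) < M := lt_of_lt_of_le one_pos hM
  have hv0 : (0:ℝ) < v := lt_of_lt_of_le one_pos hv
  set s := L/N with hs
  have hs0 : 0 < s := div_pos hL hN
  set b := Real.sqrt (2*s/v) with hbdef
  have hb0 : 0 < b := Real.sqrt_pos.2 (by positivity)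
  have hb2 : b^2 = 2*s/v := Real.sq_sqrt (by positivity)
  set D := 1 + M*b/3 with hD
  have hD0 : 0 < D := by rw [hD]; positivity
  refine ⟨b/D, by positivity, ?_⟩
  have hvb : Real.sqrt (2*v*L/N) = v*b := by
    have h1 : 2*v*L/N = (v*b)^2 := by
      rw [mul_pow, hb2, hs]; field_simp
    rw [h1, Real.sqrt_sq (by positivity)]
  set c := b/D*M with hc
  have hc0 : 0 ≤ c := by rw [hc]; positivity
  have hphi := phi_upper hc0
  have h1c3 : 1 - c/3 = 1/D := by
    rw [hc, hD]; field_simp; ring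
  have hphi2 : Real.exp c - 1 - c ≤ c^2 * D / 2 := by
    rw [h1c3] at hphi
    have hmul := mul_le_mul_of_nonneg_right hphi (by positivity : (0:ℝ) ≤ D/2)
    have e : (Real.exp c - 1 - c) * (2*(1/D)) * (D/2) = Real.exp c - 1 - c := by
      field_simp
    rw [e] at hmul
    linarith [hmul]
  have h4 : c^2 = M^2*b^2/D^2 := by rw [hc]; field_simp
  have h5 : v * (c^2*D/2)/M^2 = s/D := by
    rw [h4, hb2]; field_simp
  have hA : N * (v * (Real.exp c - 1 - c)/M^2) ≤ L/D := by
    have h3 : v * (Real.exp c - 1 - c) ≤ v * (c^2*D/2) :=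
      mul_le_mul_of_nonneg_left hphi2 hv0.le
    have h3' : v * (Real.exp c - 1 - c)/M^2 ≤ v * (c^2*D/2)/M^2 := by
      gcongr
    calc N * (v * (Real.exp c - 1 - c)/M^2) ≤ N * (v * (c^2*D/2)/M^2) :=
          mul_le_mul_of_nonneg_left h3' hN.le
      _ = N * (s/D) := by rw [h5]
      _ = L/D := by rw [hs]; field_simp
  have hB : (b/D) * (N*(M*L/(3*N) + v*b)) = (M*b*L/3 + 2*L)/D := by
    have h7 : N*(v*b^2) = 2*L := by rw [hb2, hs]; field_simp
    have h6 : (b/D) * (N*(M*L/(3*N) + v*b)) = (b*(M*L/3) + N*(v*b^2))/D := by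
      field_simp
    rw [h6, h7]; ring_nf
  have hgoal : L/D - (M*b*L/3 + 2*L)/D = -L := by
    rw [div_sub_div_same]
    rw [div_eq_iff hD0.ne']
    rw [hD]; ring
  calc N * (v * (Real.exp c - 1 - c) / M^2) - (b/D) * (N*(M*L/(3*N) + Real.sqrt (2*v*L/N)))
      = N * (v * (Real.exp c - 1 - c) / M^2) - (b/D) * (N*(M*L/(3*N) + v*b)) := by rw [hvb]
    _ ≤ L/D - (M*b*L/3 + 2*L)/D := by rw [hB]; linarith [hA]
    _ = -L := hgoal


end AuxLemmas
set_option maxHeartbeats 2000000 in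
/-- Let `μ = P_X ⊗ π₀`, `ν = P_X ⊗ π_θ` with `ν ≪ μ` and importance weight
`w = dν/dμ ≤ w_m` everywhere, and let the reward `f` take values in `[−1,0]`. With true risk
`R(π_θ) = E_ν[f]` and the IPS empirical risk on `n` i.i.d. samples from `μ`, for any
`δ ∈ (0,1)`, with probability at least `1 − δ`,
`R(π_θ) ≤ R̂ + w_m·log(1/δ)/(3n) + √((w_m·√(2·min(D(ν‖μ),D(μ‖ν))) + 2)·log(1/δ)/n)`.
(When both divergences are `∞` the claim is vacuous, captured by the finiteness hypothesis.) -/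
theorem stmt_7 {X A : Type*} [MeasurableSpace X] [MeasurableSpace A]
    (PX : Measure X) [IsProbabilityMeasure PX]
    (π0 πθ : Kernel X A) [IsMarkovKernel π0] [IsMarkovKernel πθ]
    (f : X × A → ℝ) (hf : Measurable f)
    (hfb : ∀ p, f p ∈ Set.Icc (-1 : ℝ) 0)
    (μ ν : Measure (X × A)) (hμ : μ = PX ⊗ₘ π0) (hν : ν = PX ⊗ₘ πθ)
    (hac : ν ≪ μ)
    (w : X × A → ℝ) (hw : w = fun p => (ν.rnDeriv μ p).toReal)
    (w_m : ℝ) (hwm : ∀ p, ν.rnDeriv μ p ≤ ENNReal.ofReal w_m)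
    {Ω : Type*} [MeasurableSpace Ω] (P : Measure Ω) [IsProbabilityMeasure P]
    (n : ℕ) (hn : 0 < n) (Zs : Fin n → Ω → X × A)
    (hmeas : ∀ i, Measurable (Zs i))
    (hindep : iIndepFun Zs P)
    (hdist : ∀ i, Measure.map (Zs i) P = μ)
    (δ : ℝ) (hδ : δ ∈ Set.Ioo (0 : ℝ) 1)
    (hfin : min (klDiv ν μ) (klDiv μ ν) ≠ ⊤) :
    ENNReal.ofReal (1 - δ) ≤
      P {ω | ∫ p, f p ∂ν ≤
        (1 / (n : ℝ)) * ∑ i, f (Zs i ω) * w (Zs i ω)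
          + w_m * Real.log (1 / δ) / (3 * n)
          + Real.sqrt
              ((w_m * Real.sqrt (2 * (min (klDiv ν μ) (klDiv μ ν)).toReal) + 2)
                * Real.log (1 / δ) / n)} := by
  obtain ⟨hδ0, hδ1⟩ := hδ
  have hμprob : IsProbabilityMeasure μ := by rw [hμ]; infer_instance
  have hνprob : IsProbabilityMeasure ν := by rw [hν]; infer_instance
  have hn0 : (0:ℝ) < (n:ℝ) := by exact_mod_cast hn
  -- basics about w
  have hwmeas : Measurable w := by
    rw [hw]; exact (Measure.measurable_rnDeriv ν μ).ennreal_toReal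
  have hwm1 : 1 ≤ w_m := by
    by_contra hlt
    push_neg at hlt
    have h1 : (1:ℝ≥0∞) = ∫⁻ p, ν.rnDeriv μ p ∂μ := by
      rw [Measure.lintegral_rnDeriv hac, measure_univ]
    have h2 : ∫⁻ p, ν.rnDeriv μ p ∂μ ≤ ∫⁻ _, ENNReal.ofReal w_m ∂μ :=
      lintegral_mono hwm
    rw [lintegral_const, measure_univ, mul_one] at h2
    have h3 : (1:ℝ≥0∞) ≤ ENNReal.ofReal w_m := h1 ▸ h2
    rw [ENNReal.one_le_ofReal] at h3
    linarith
  have hwm0 : (0:ℝ) < w_m := by linarith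
  have hw0 : ∀ p, 0 ≤ w p := fun p => by rw [hw]; exact ENNReal.toReal_nonneg
  have hwle : ∀ p, w p ≤ w_m := by
    intro p
    rw [hw]
    have := ENNReal.toReal_mono ENNReal.ofReal_ne_top (hwm p)
    rwa [ENNReal.toReal_ofReal hwm0.le] at this
  -- g and its bounds
  set g : X × A → ℝ := fun p => -(f p * w p) with hg
  have hgmeas : Measurable g := (hf.mul hwmeas).neg
  have hg0 : ∀ p, 0 ≤ g p := by
    intro p
    have h1 := (hfb p).1; have h2 := (hfb p).2
    have := hw0 p
    simp only [hg]
    nlinarith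
  have hgle : ∀ p, g p ≤ w_m := by
    intro p
    have h1 := (hfb p).1; have h2 := (hfb p).2
    have h3 := hw0 p; have h4 := hwle p
    simp only [hg]
    nlinarith
  -- integrability helper on μ
  have hbint : ∀ (F : X × A → ℝ) (C : ℝ), Measurable F → (∀ p, |F p| ≤ C) →
      Integrable F μ := by
    intro F C hFm hFb
    exact Integrable.mono' (integrable_const C) hFm.aestronglyMeasurable
      (Filter.Eventually.of_forall hFb)
  have hgint : Integrable g μ := hbint g w_m hgmeas
    (fun p => abs_le.2 ⟨by linarith [hg0 p], hgle p⟩)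
  have hg2int : Integrable (fun p => (g p)^2) μ := hbint _ (w_m^2) (hgmeas.pow_const 2)
    (fun p => by rw [abs_of_nonneg (sq_nonneg _)]; nlinarith [hg0 p, hgle p])
  have hwint : Integrable w μ := hbint w w_m hwmeas
    (fun p => abs_le.2 ⟨by linarith [hw0 p], hwle p⟩)
  have hw2int : Integrable (fun p => (w p)^2) μ := hbint _ (w_m^2) (hwmeas.pow_const 2)
    (fun p => by rw [abs_of_nonneg (sq_nonneg _)]; nlinarith [hw0 p, hwle p])
  have habswint : Integrable (fun p => |w p - 1|) μ := (hwint.sub (integrable_const 1)).abs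
  -- mean
  set m : ℝ := ∫ p, g p ∂μ with hm
  have hm0 : 0 ≤ m := integral_nonneg hg0
  have hmle : m ≤ w_m := by
    have := integral_mono hgint (integrable_const w_m) hgle
    simpa using this
  have hw1 : ∫ p, w p ∂μ = 1 := by
    rw [hw, Measure.integral_toReal_rnDeriv hac]
    simp
  have hfν : ∫ p, f p ∂ν = -m := by
    have h := MeasureTheory.integral_rnDeriv_smul hac (f := f)
    have h2 : ∫ p, (ν.rnDeriv μ p).toReal • f p ∂μ = ∫ p, -(g p) ∂μ := by
      refine integral_congr_ae (Filter.Eventually.of_forall fun p => ?_)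
      simp only [hg, smul_eq_mul, hw, neg_neg]
      ring
    rw [← h, h2, integral_neg, hm]
  -- K and the variance bound
  set K : ℝ := (min (klDiv ν μ) (klDiv μ ν)).toReal with hK
  have hK0 : 0 ≤ K := ENNReal.toReal_nonneg
  have hwfin : ∀ p, ν.rnDeriv μ p ≠ ⊤ :=
    fun p => (lt_of_le_of_lt (hwm p) ENNReal.ofReal_lt_top).ne
  have htoR : ∀ I : ℝ, I ≤ (ENNReal.ofReal I).toReal := by
    intro I
    rcases le_or_gt 0 I with h | h
    · rw [ENNReal.toReal_ofReal h]
    · rw [ENNReal.ofReal_of_nonpos h.le, ENNReal.toReal_zero]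
      exact h.le
  have hTV : ∫ p, |w p - 1| ∂μ ≤ Real.sqrt (2*K) := by
    rcases le_total (klDiv ν μ) (klDiv μ ν) with hle | hle
    · have hmin : min (klDiv ν μ) (klDiv μ ν) = klDiv ν μ := min_eq_left hle
      have hne : klDiv ν μ ≠ ⊤ := by rw [hmin] at hfin; exact hfin
      have hcond : ν ≪ μ ∧ Integrable (llr ν μ) ν := by
        by_contra hcon
        exact hne (by unfold klDiv; rw [if_neg hcon])
      have hp := @pinsker_l1 _ _ ν μ hνprob hμprob hcond.1 hcond.2
      have hval : klDiv ν μ = ENNReal.ofReal (∫ z, llr ν μ z ∂ν) := by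
        unfold klDiv; rw [if_pos hcond]
      have hKge : ∫ z, llr ν μ z ∂ν ≤ K := by
        rw [hK, hmin, hval]
        exact htoR _
      calc ∫ p, |w p - 1| ∂μ = ∫ p, |(ν.rnDeriv μ p).toReal - 1| ∂μ := by rw [hw]
        _ ≤ Real.sqrt (2 * ∫ z, llr ν μ z ∂ν) := hp
        _ ≤ Real.sqrt (2*K) := Real.sqrt_le_sqrt (by linarith)
    · have hmin : min (klDiv ν μ) (klDiv μ ν) = klDiv μ ν := min_eq_right hle
      have hne : klDiv μ ν ≠ ⊤ := by rw [hmin] at hfin; exact hfin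
      have hcond : μ ≪ ν ∧ Integrable (llr μ ν) μ := by
        by_contra hcon
        exact hne (by unfold klDiv; rw [if_neg hcon])
      have hp := @pinsker_l1 _ _ μ ν hμprob hνprob hcond.1 hcond.2
      have hval : klDiv μ ν = ENNReal.ofReal (∫ z, llr μ ν z ∂μ) := by
        unfold klDiv; rw [if_pos hcond]
      have hKge : ∫ z, llr μ ν z ∂μ ≤ K := by
        rw [hK, hmin, hval]
        exact htoR _
      have hchain : μ.rnDeriv ν * ν.rnDeriv μ =ᵐ[μ] 1 :=
        (Measure.rnDeriv_mul_rnDeriv hcond.1 (κ := μ)).trans (Measure.rnDeriv_self μ)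
      have hufin : ∀ᵐ p ∂μ, μ.rnDeriv ν p ≠ ⊤ := by
        have h1 : ∀ᵐ p ∂ν, μ.rnDeriv ν p < ⊤ := Measure.rnDeriv_lt_top μ ν
        exact (h1.filter_mono hcond.1.ae_le).mono fun p hp => hp.ne
      have heq1 : ∫ p, |w p - 1| ∂μ
          = ∫ p, (ν.rnDeriv μ p).toReal • |(μ.rnDeriv ν p).toReal - 1| ∂μ := by
        refine integral_congr_ae ?_
        filter_upwards [hchain, hufin] with p h1 h2
        have h1' : μ.rnDeriv ν p * ν.rnDeriv μ p = 1 := by simpa using h1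
        have hmul : (μ.rnDeriv ν p).toReal * (ν.rnDeriv μ p).toReal = 1 := by
          rw [← ENNReal.toReal_mul, h1', ENNReal.toReal_one]
        have hW0 : (0:ℝ) ≤ (ν.rnDeriv μ p).toReal := ENNReal.toReal_nonneg
        simp only [hw, smul_eq_mul]
        have e3 : (ν.rnDeriv μ p).toReal * ((μ.rnDeriv ν p).toReal - 1)
            = 1 - (ν.rnDeriv μ p).toReal := by
          have : (μ.rnDeriv ν p).toReal * (ν.rnDeriv μ p).toReal = 1 := hmul
          nlinarith [this]
        calc |(ν.rnDeriv μ p).toReal - 1|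
            = |1 - (ν.rnDeriv μ p).toReal| := abs_sub_comm _ _
          _ = |(ν.rnDeriv μ p).toReal * ((μ.rnDeriv ν p).toReal - 1)| := by rw [e3]
          _ = |(ν.rnDeriv μ p).toReal| * |(μ.rnDeriv ν p).toReal - 1| := abs_mul _ _
          _ = (ν.rnDeriv μ p).toReal * |(μ.rnDeriv ν p).toReal - 1| := by
              rw [abs_of_nonneg hW0]
      rw [heq1, MeasureTheory.integral_rnDeriv_smul hac]
      calc ∫ p, |(μ.rnDeriv ν p).toReal - 1| ∂ν
          ≤ Real.sqrt (2 * ∫ z, llr μ ν z ∂μ) := hp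
        _ ≤ Real.sqrt (2*K) := Real.sqrt_le_sqrt (by linarith)
  set v : ℝ := (w_m * Real.sqrt (2*K) + 2)/2 with hv
  have hv1 : 1 ≤ v := by
    have : 0 ≤ w_m * Real.sqrt (2*K) := mul_nonneg hwm0.le (Real.sqrt_nonneg _)
    rw [hv]; linarith
  have hvar : ∫ p, (g p)^2 ∂μ ≤ v := by
    have step1 : ∫ p, (g p)^2 ∂μ ≤ ∫ p, (w p)^2 ∂μ := by
      refine integral_mono hg2int hw2int fun p => ?_
      have h1 := (hfb p).1; have h2 := (hfb p).2
      have h3 := hw0 p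
      have hf2 : (f p)^2 ≤ 1 := by nlinarith
      simp only [hg]
      have : (-(f p * w p))^2 = (f p)^2 * (w p)^2 := by ring
      rw [this]
      nlinarith [sq_nonneg (w p)]
    have step2 : ∫ p, (w p)^2 ∂μ ≤ 1 + (w_m/2) * ∫ p, |w p - 1| ∂μ := by
      have hptw : ∀ p, (w p)^2 ≤ w p + (w_m/2) * (|w p - 1| + (w p - 1)) := by
        intro p
        have h3 := hw0 p; have h4 := hwle p
        rcases le_total 1 (w p) with h5 | h5
        · rw [abs_of_nonneg (by linarith)]
          nlinarith
        · rw [abs_of_nonpos (by linarith)]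
          nlinarith
      have hwsub : Integrable (fun p => w p - 1) μ := hwint.sub (integrable_const 1)
      have hi1 : Integrable (fun p => |w p - 1| + (w p - 1)) μ := habswint.add hwsub
      have hi2 : Integrable (fun p => (w_m/2) * (|w p - 1| + (w p - 1))) μ := hi1.const_mul _
      have hconst : ∫ _, (1:ℝ) ∂μ = 1 := by
        simp
      calc ∫ p, (w p)^2 ∂μ
          ≤ ∫ p, (w p + (w_m/2) * (|w p - 1| + (w p - 1))) ∂μ :=
            integral_mono hw2int (hwint.add hi2) hptw
        _ = ∫ p, w p ∂μ + (w_m/2) * (∫ p, (|w p - 1| + (w p - 1)) ∂μ) := by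
            rw [integral_add hwint hi2, integral_const_mul]
        _ = ∫ p, w p ∂μ + (w_m/2) * ((∫ p, |w p - 1| ∂μ) + ((∫ p, w p ∂μ) - ∫ _, (1:ℝ) ∂μ)) := by
            rw [integral_add habswint hwsub, integral_sub hwint (integrable_const 1)]
        _ = 1 + (w_m/2) * ∫ p, |w p - 1| ∂μ := by
            rw [hw1, hconst]; ring
    have step3 : 1 + (w_m/2) * ∫ p, |w p - 1| ∂μ ≤ 1 + (w_m/2) * Real.sqrt (2*K) := by
      have := mul_le_mul_of_nonneg_left hTV (by linarith : (0:ℝ) ≤ w_m/2)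
      linarith
    have : ∫ p, (g p)^2 ∂μ ≤ 1 + (w_m/2) * Real.sqrt (2*K) :=
      le_trans step1 (le_trans step2 step3)
    rw [hv]; linarith
  -- centered second moment
  have hi3 : Integrable (fun p => 2*m*(g p)) μ := hgint.const_mul _
  have hi4 : Integrable (fun p => (g p)^2 - 2*m*(g p)) μ := hg2int.sub hi3
  have hgmint : Integrable (fun p => (g p - m)^2) μ := by
    have : (fun p => (g p - m)^2) = fun p => ((g p)^2 - 2*m*(g p)) + m^2 := by
      funext p; ring
    rw [this]
    exact hi4.add (integrable_const _)
  have hvar2 : ∫ p, (g p - m)^2 ∂μ ≤ v := by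
    have e : ∫ p, (g p - m)^2 ∂μ = ∫ p, (g p)^2 ∂μ - m^2 := by
      have e1 : (fun p => (g p - m)^2) = fun p => ((g p)^2 - 2*m*(g p)) + m^2 := by
        funext p; ring
      rw [e1, integral_add hi4 (integrable_const _),
        integral_sub hg2int hi3, integral_const_mul, ← hm, integral_const,
        probReal_univ]
      simp only [smul_eq_mul, one_mul]
      ring
    rw [e]
    nlinarith [hvar, sq_nonneg m]
  -- the exponent optimization
  set L : ℝ := Real.log (1/δ) with hL
  have hL0 : 0 < L := by
    rw [hL]
    apply Real.log_pos
    rw [lt_div_iff₀ hδ0]; linarith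
  obtain ⟨l, hl0, hcalc⟩ := final_calc (M := w_m) (v := v) (L := L) (N := (n:ℝ))
    hwm1 hv1 hL0 hn0
  set c : ℝ := l * w_m with hc
  have hc0 : 0 ≤ c := mul_nonneg hl0 hwm0.le
  set φ : ℝ := Real.exp c - 1 - c with hφ
  have hφ0 : 0 ≤ φ := by
    have h1 : c^2/2 ≤ φ := by rw [hφ]; exact quad_le_phi hc0
    nlinarith [sq_nonneg c]
  -- per-sample mgf bound
  set Y : Fin n → Ω → ℝ := fun i ω => g (Zs i ω) - m with hY
  have hYmeas : ∀ i, Measurable (Y i) := fun i => (hgmeas.comp (hmeas i)).sub measurable_const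
  have hmgf : ∀ i, mgf (Y i) P l ≤ Real.exp (v * φ / w_m^2) := by
    intro i
    have hFmeas : Measurable (fun p : X × A => Real.exp (l * (g p - m))) :=
      ((hgmeas.sub measurable_const).const_mul l).exp
    have hmgfeq : mgf (Y i) P l = ∫ p, Real.exp (l * (g p - m)) ∂μ := by
      have h0 : mgf (Y i) P l = ∫ ω, Real.exp (l * Y i ω) ∂P := rfl
      rw [h0, ← hdist i, integral_map (hmeas i).aemeasurable hFmeas.aestronglyMeasurable]
    have hpt : ∀ p, Real.exp (l * (g p - m)) ≤ 1 + l*(g p - m) + (g p - m)^2*(φ/w_m^2) := by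
      intro p
      have ht : (g p - m)/w_m ≤ 1 := by
        rw [div_le_one hwm0]
        linarith [hgle p, hm0]
      have hb := bennett_pt hc0 ht
      have hct : c * ((g p - m)/w_m) = l * (g p - m) := by
        rw [hc]; field_simp
      have ht2 : ((g p - m)/w_m)^2 * (Real.exp c - 1 - c) = (g p - m)^2*(φ/w_m^2) := by
        rw [hφ]; field_simp
      rw [hct, ht2] at hb
      exact hb
    have hint1 : Integrable (fun p => Real.exp (l * (g p - m))) μ := by
      refine hbint _ (Real.exp (l * w_m)) hFmeas fun p => ?_
      rw [abs_of_nonneg (Real.exp_nonneg _)]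
      apply Real.exp_le_exp.2
      have := hgle p; have := hm0
      nlinarith [hl0]
    have hi5 : Integrable (fun p => l*(g p - m)) μ :=
      (hgint.sub (integrable_const m)).const_mul l
    have hi6 : Integrable (fun p => (g p - m)^2*(φ/w_m^2)) μ := hgmint.mul_const _
    have hi7 : Integrable (fun p => 1 + l*(g p - m)) μ := (integrable_const 1).add hi5
    have e0 : ∫ p, (g p - m) ∂μ = 0 := by
      rw [integral_sub hgint (integrable_const m), ← hm, integral_const, probReal_univ]
      simp
    have eA : ∫ p, (1 + l*(g p - m)) ∂μ = 1 := by
      rw [integral_add (integrable_const 1) hi5, integral_const_mul, e0, integral_const,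
        probReal_univ]
      simp
    rw [hmgfeq]
    calc ∫ p, Real.exp (l * (g p - m)) ∂μ
        ≤ ∫ p, (1 + l*(g p - m) + (g p - m)^2*(φ/w_m^2)) ∂μ :=
          integral_mono hint1 (hi7.add hi6) hpt
      _ = 1 + (∫ p, (g p - m)^2 ∂μ)*(φ/w_m^2) := by
          rw [integral_add hi7 hi6, eA, integral_mul_const]
      _ ≤ 1 + v*(φ/w_m^2) := by
          have h8 : 0 ≤ φ/w_m^2 := div_nonneg hφ0 (sq_nonneg _)
          nlinarith [mul_le_mul_of_nonneg_right hvar2 h8]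
      _ ≤ Real.exp (v*(φ/w_m^2)) := by
          linarith [Real.add_one_le_exp (v*(φ/w_m^2))]
      _ = Real.exp (v*φ/w_m^2) := by rw [mul_div_assoc]
  -- sum and Chernoff
  set T : Ω → ℝ := fun ω => ∑ i, Y i ω with hT
  have hTmeas : Measurable T := Finset.measurable_sum _ (fun i _ => hYmeas i)
  have hTmgf : mgf T P l = ∏ i, mgf (Y i) P l := by
    have hcomp : iIndepFun
        (fun i => (fun z => g z - m) ∘ Zs i) P :=
      hindep.comp (fun _ => fun z => g z - m) (fun _ => hgmeas.sub measurable_const)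
    have h := hcomp.mgf_sum (t := l) (fun i => (hgmeas.sub measurable_const).comp (hmeas i))
      Finset.univ
    have hYeq : ∀ i, Y i = (fun z => g z - m) ∘ Zs i := fun i => rfl
    have hTeq : T = ∑ i, (fun z => g z - m) ∘ Zs i := by
      funext ω
      rw [hT]
      simp only [Finset.sum_apply]
      rfl
    rw [hTeq, h]
    exact Finset.prod_congr rfl fun i _ => rfl
  set τ : ℝ := w_m * L/(3*(n:ℝ)) + Real.sqrt (2*v*L/(n:ℝ)) with hτ
  have hTexp_int : Integrable (fun ω => Real.exp (l * T ω)) P := by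
    refine Integrable.mono' (integrable_const (Real.exp (l * ((n:ℝ) * w_m))))
      ((hTmeas.const_mul l).exp).aestronglyMeasurable
      (Filter.Eventually.of_forall fun ω => ?_)
    rw [Real.norm_of_nonneg (Real.exp_nonneg _)]
    apply Real.exp_le_exp.2
    apply mul_le_mul_of_nonneg_left _ hl0
    calc T ω ≤ ∑ _i : Fin n, w_m := by
          refine Finset.sum_le_sum fun i _ => ?_
          simp only [hY]
          have := hgle (Zs i ω); have := hm0
          linarith
      _ = (n:ℝ) * w_m := by simp [mul_comm]
  have hchern : (P {ω | (n:ℝ)*τ ≤ T ω}).toReal ≤ δ := by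
    have h1 := measure_ge_le_exp_mul_mgf (X := T) (μ := P) ((n:ℝ)*τ) hl0 hTexp_int
    have h2 : mgf T P l ≤ Real.exp (v * φ / w_m^2) ^ n := by
      rw [hTmgf]
      calc ∏ i, mgf (Y i) P l ≤ ∏ _i : Fin n, Real.exp (v * φ / w_m^2) :=
            Finset.prod_le_prod (fun i _ => mgf_nonneg) (fun i _ => hmgf i)
        _ = Real.exp (v * φ / w_m^2) ^ n := by
            rw [Finset.prod_const, Finset.card_univ, Fintype.card_fin]
    have h3 : Real.exp (-l * ((n:ℝ)*τ)) * mgf T P l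
        ≤ Real.exp (-l * ((n:ℝ)*τ)) * Real.exp (v * φ / w_m^2) ^ n :=
      mul_le_mul_of_nonneg_left h2 (Real.exp_nonneg _)
    have h4 : Real.exp (-l * ((n:ℝ)*τ)) * Real.exp (v * φ / w_m^2) ^ n ≤ δ := by
      rw [← Real.exp_nat_mul, ← Real.exp_add]
      have h5 : -l * ((n:ℝ)*τ) + (n:ℝ) * (v * φ / w_m^2) ≤ -L := by
        have := hcalc
        rw [hτ] at *
        simp only [hφ, hc] at *
        linarith
      calc Real.exp _ ≤ Real.exp (-L) := Real.exp_le_exp.2 h5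
        _ = δ := by
            rw [hL, ← Real.log_inv, Real.exp_log (by positivity : (0:ℝ) < (1/δ)⁻¹)]
            simp
    exact le_trans h1 (le_trans h3 h4)
  -- complement inclusion
  set S : Set Ω := {ω | ∫ p, f p ∂ν ≤
        (1 / (n : ℝ)) * ∑ i, f (Zs i ω) * w (Zs i ω)
          + w_m * Real.log (1 / δ) / (3 * n)
          + Real.sqrt
              ((w_m * Real.sqrt (2 * (min (klDiv ν μ) (klDiv μ ν)).toReal) + 2)
                * Real.log (1 / δ) / n)} with hS
  have hsqrt_eq : Real.sqrt ((w_m * Real.sqrt (2 * K) + 2) * L / n)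
      = Real.sqrt (2*v*L/(n:ℝ)) := by
    congr 1
    rw [hv]; field_simp
  have hSmeas : MeasurableSet S := by
    rw [hS]
    apply measurableSet_le measurable_const
    apply Measurable.add
    apply Measurable.add
    · exact (Finset.measurable_sum _ (fun i _ =>
        (hf.comp (hmeas i)).mul (hwmeas.comp (hmeas i)))).const_mul _
    · exact measurable_const
    · exact measurable_const
  have hsub : Sᶜ ⊆ {ω | (n:ℝ)*τ ≤ T ω} := by
    intro ω hω
    simp only [hS, Set.mem_compl_iff, Set.mem_setOf_eq, not_le] at hω
    simp only [Set.mem_setOf_eq]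
    rw [hfν] at hω
    have hsum : ∑ i, f (Zs i ω) * w (Zs i ω) = -∑ i, g (Zs i ω) := by
      rw [← Finset.sum_neg_distrib]
      refine Finset.sum_congr rfl fun i _ => ?_
      simp [hg]
    rw [hsum] at hω
    have hTω : T ω = (∑ i, g (Zs i ω)) - (n:ℝ)*m := by
      rw [hT]
      simp only [hY]
      rw [Finset.sum_sub_distrib]
      simp [Finset.card_univ, mul_comm]
    -- hω : (1/n)*(-∑ g) + w_m*L/(3n) + √(...) < -m
    rw [hsqrt_eq] at hω
    have : (1/(n:ℝ)) * (-∑ i, g (Zs i ω)) + τ < -m := by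
      rw [hτ]
      linarith [hω]
    have h6 : (n:ℝ) * ((1/(n:ℝ)) * (-∑ i, g (Zs i ω)) + τ) < (n:ℝ) * (-m) :=
      (mul_lt_mul_iff_right₀ hn0).2 this
    rw [mul_add, ← mul_assoc, mul_one_div, div_self hn0.ne', one_mul] at h6
    rw [hTω]
    linarith
  -- conclude
  have hPB : P Sᶜ ≤ ENNReal.ofReal δ := by
    refine le_trans (measure_mono hsub) ?_
    rw [ENNReal.le_ofReal_iff_toReal_le (measure_ne_top P _) hδ0.le]
    exact hchern
  have hPS : P S = 1 - P Sᶜ := by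
    rw [← prob_compl_eq_one_sub hSmeas.compl, compl_compl]
  rw [hPS]
  calc ENNReal.ofReal (1 - δ) = 1 - ENNReal.ofReal δ := by
        rw [ENNReal.ofReal_sub _ hδ0.le, ENNReal.ofReal_one]
    _ ≤ 1 - P Sᶜ := tsub_le_tsub_left hPB 1
end
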